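/- Let 0 ≤ t₁ < t₂ < ∞, set x₀ := (t₁+t₂)/2 and r := (t₂−t₁)/2, and let z be a complex number with Im z > 0. (1) If |z − x₀| > r, then ω(z,[t₁,t₂]) ≤ (1/π)·arctan( 2r·|z−x₀| / (|z−x₀|² − r²) ). (2) If |z − x₀| = r, then ω(z,[t₁,t₂]) = 1/2. (3) If 0 < |z − x₀| < r, then ω(z,[t₁,t₂]) ≥ 1 − (1/π)·arctan( 2r·|z−x₀| / (r² − |z−x₀|²) ) ≥ 1 − (1/π)·2r·|z−x₀| / (r² − |z−x₀|²). (4) Moreover, writing z − x₀ = t·e^{iθ} with 0 < t < r and 0 < θ < π, one has the exact formula ω(z,[t₁,t₂]) = 1 − (1/π)·arctan( 2·r·t·sin θ / (r² − t²) ), whose minimum over θ ∈ (0,π) at fixed t is attained at θ = π/2. -/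

import Mathlib

open Real

lemma my_arctan_le_self {x : ℝ} (hx : 0 ≤ x) : Real.arctan x ≤ x := by
  have h1 : 0 ≤ Real.arctan x := by
    rw [← Real.arctan_zero]
    exact Real.arctan_strictMono.monotone hx
  have h2 : Real.arctan x < π / 2 := Real.arctan_lt_pi_div_two x
  calc Real.arctan x ≤ Real.tan (Real.arctan x) := Real.le_tan h1 h2
    _ = x := Real.tan_arctan x

lemma sumA (a y r : ℝ) (hy : 0 < y) (hd : r^2 < a^2 + y^2) :
    arctan ((r - a)/y) + arctan ((r + a)/y) = arctan (2*r*y/(a^2 + y^2 - r^2)) := by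
  have hy' : y ≠ 0 := hy.ne'
  have huv : ((r - a)/y) * ((r + a)/y) = (r^2 - a^2)/y^2 := by field_simp; ring
  have hlt : ((r - a)/y) * ((r + a)/y) < 1 := by
    rw [huv, div_lt_one (by positivity)]; nlinarith
  rw [arctan_add hlt]
  congr 1
  have hy2 : (y:ℝ)^2 ≠ 0 := by positivity
  have e1 : (r - a)/y + (r + a)/y = (2*r*y)/y^2 := by field_simp; ring
  have e2 : 1 - ((r - a)/y) * ((r + a)/y) = (a^2 + y^2 - r^2)/y^2 := by
    rw [huv]; field_simp; ring
  rw [e1, e2, div_div_div_cancel_right₀ hy2]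

lemma sumB (a y r : ℝ) (hy : 0 < y) (hr : 0 < r) (hd : a^2 + y^2 = r^2) :
    arctan ((r - a)/y) + arctan ((r + a)/y) = π/2 := by
  have hy' : y ≠ 0 := hy.ne'
  have huv : ((r - a)/y) * ((r + a)/y) = 1 := by
    field_simp; nlinarith
  have hsum : 0 < (r - a)/y + (r + a)/y := by
    have e : (r - a)/y + (r + a)/y = 2*r/y := by field_simp; ring
    rw [e]; positivity
  have hu : 0 < (r - a)/y := by
    have hprod : 0 < ((r - a)/y) * ((r + a)/y) := huv ▸ one_pos
    rcases mul_pos_iff.mp hprod with ⟨h1, _⟩ | ⟨h1, h2⟩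
    · exact h1
    · linarith
  have hv : (r + a)/y = ((r - a)/y)⁻¹ := eq_inv_of_mul_eq_one_right huv
  rw [hv, arctan_inv_of_pos hu]
  ring

lemma sumC (a y r : ℝ) (hy : 0 < y) (hr : 0 < r) (hd : a^2 + y^2 < r^2) :
    arctan ((r - a)/y) + arctan ((r + a)/y) = π - arctan (2*r*y/(r^2 - (a^2 + y^2))) := by
  have hy' : y ≠ 0 := hy.ne'
  have huv : ((r - a)/y) * ((r + a)/y) = (r^2 - a^2)/y^2 := by field_simp; ring
  have hgt : 1 < ((r - a)/y) * ((r + a)/y) := by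
    rw [huv, lt_div_iff₀ (by positivity)]; nlinarith
  have hsum : 0 < (r - a)/y + (r + a)/y := by
    have e : (r - a)/y + (r + a)/y = 2*r/y := by field_simp; ring
    rw [e]; positivity
  have hu : 0 < (r - a)/y := by
    have hprod : 0 < ((r - a)/y) * ((r + a)/y) := lt_trans one_pos hgt
    rcases mul_pos_iff.mp hprod with ⟨h1, _⟩ | ⟨h1, h2⟩
    · exact h1
    · linarith
  rw [arctan_add_eq_add_pi hgt hu]
  have hy2 : (y:ℝ)^2 ≠ 0 := by positivity
  have e1 : (r - a)/y + (r + a)/y = (2*r*y)/y^2 := by field_simp; ring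
  have e2 : 1 - ((r - a)/y) * ((r + a)/y) = (-(r^2 - (a^2 + y^2)))/y^2 := by
    rw [huv]; field_simp; ring
  rw [e1, e2, div_div_div_cancel_right₀ hy2, div_neg, arctan_neg]
  ring


/-- The harmonic measure of the segment `[t₁, t₂] ⊂ ℝ` at a point `z` of the open upper
half-plane: `ω(z,[t₁,t₂]) = (1/π)·(arctan((t₂ - Re z)/Im z) - arctan((t₁ - Re z)/Im z))`. -/
noncomputable def hmUHP (z : ℂ) (t₁ t₂ : ℝ) : ℝ :=
  (1 / Real.pi) *
    (Real.arctan ((t₂ - z.re) / z.im) - Real.arctan ((t₁ - z.re) / z.im))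

lemma hm_eq (t₁ t₂ x₀ r : ℝ) (hx₀ : x₀ = (t₁ + t₂) / 2) (hr : r = (t₂ - t₁) / 2) (z : ℂ) :
    hmUHP z t₁ t₂ = (1/π) *
      (arctan ((r - (z.re - x₀))/z.im) + arctan ((r + (z.re - x₀))/z.im)) := by
  unfold hmUHP
  have e1 : t₂ - z.re = r - (z.re - x₀) := by rw [hx₀, hr]; ring
  have e2 : t₁ - z.re = -(r + (z.re - x₀)) := by rw [hx₀, hr]; ring
  rw [e1, e2, neg_div, arctan_neg]; ring

lemma hmA (t₁ t₂ x₀ r : ℝ) (hx₀ : x₀ = (t₁ + t₂) / 2) (hr : r = (t₂ - t₁) / 2)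
    (z : ℂ) (hz : 0 < z.im) (hd : r^2 < (z.re - x₀)^2 + z.im^2) :
    hmUHP z t₁ t₂ = (1/π) * arctan (2*r*z.im/((z.re - x₀)^2 + z.im^2 - r^2)) := by
  rw [hm_eq t₁ t₂ x₀ r hx₀ hr z, sumA _ _ _ hz hd]

lemma hmB (t₁ t₂ x₀ r : ℝ) (hx₀ : x₀ = (t₁ + t₂) / 2) (hr : r = (t₂ - t₁) / 2)
    (hr0 : 0 < r) (z : ℂ) (hz : 0 < z.im) (hd : (z.re - x₀)^2 + z.im^2 = r^2) :
    hmUHP z t₁ t₂ = 1/2 := by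
  rw [hm_eq t₁ t₂ x₀ r hx₀ hr z, sumB _ _ _ hz hr0 hd]
  field_simp

lemma hmC (t₁ t₂ x₀ r : ℝ) (hx₀ : x₀ = (t₁ + t₂) / 2) (hr : r = (t₂ - t₁) / 2)
    (hr0 : 0 < r) (z : ℂ) (hz : 0 < z.im) (hd : (z.re - x₀)^2 + z.im^2 < r^2) :
    hmUHP z t₁ t₂
      = 1 - (1/π) * arctan (2*r*z.im/(r^2 - ((z.re - x₀)^2 + z.im^2))) := by
  rw [hm_eq t₁ t₂ x₀ r hx₀ hr z, sumC _ _ _ hz hr0 hd]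
  have hπ : (π:ℝ) ≠ 0 := pi_ne_zero
  field_simp

set_option maxHeartbeats 1000000 in
/-- Proposition `pr:eshmb` (with Lemma `l:oups`): let `0 ≤ t₁ < t₂`, `x₀ = (t₁+t₂)/2`,
`r = (t₂-t₁)/2` and let `z` lie in the open upper half-plane. Then:
(1) if `|z-x₀| > r` then `ω(z,[t₁,t₂]) ≤ (1/π)·arctan(2r|z-x₀|/(|z-x₀|²-r²))`;
(2) if `|z-x₀| = r` then `ω(z,[t₁,t₂]) = 1/2`;
(3) if `0 < |z-x₀| < r` then
`ω(z,[t₁,t₂]) ≥ 1 - (1/π)·arctan(2r|z-x₀|/(r²-|z-x₀|²)) ≥ 1 - (1/π)·2r|z-x₀|/(r²-|z-x₀|²)`;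
(4) if moreover `z - x₀ = t·e^{iθ}` with `0 < t < r`, `0 < θ < π`, then
`ω(z,[t₁,t₂]) = 1 - (1/π)·arctan(2rt·sin θ/(r²-t²))`, and the minimum over `θ ∈ (0,π)`
at fixed `t` is attained at `θ = π/2`. -/
theorem hmUHP_halfdisk_bounds
    (t₁ t₂ x₀ r : ℝ) (h1 : 0 ≤ t₁) (h12 : t₁ < t₂)
    (hx₀ : x₀ = (t₁ + t₂) / 2) (hr : r = (t₂ - t₁) / 2)
    (z : ℂ) (hz : 0 < z.im) :
    (r < ‖z - (x₀ : ℂ)‖ →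
      hmUHP z t₁ t₂
        ≤ (1 / Real.pi) * Real.arctan (2 * r * ‖z - (x₀ : ℂ)‖ /
            (‖z - (x₀ : ℂ)‖ ^ 2 - r ^ 2))) ∧
    (‖z - (x₀ : ℂ)‖ = r → hmUHP z t₁ t₂ = 1 / 2) ∧
    (0 < ‖z - (x₀ : ℂ)‖ → ‖z - (x₀ : ℂ)‖ < r →
      (1 - (1 / Real.pi) * Real.arctan (2 * r * ‖z - (x₀ : ℂ)‖ /
          (r ^ 2 - ‖z - (x₀ : ℂ)‖ ^ 2)) ≤ hmUHP z t₁ t₂) ∧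
      1 - (1 / Real.pi) * (2 * r * ‖z - (x₀ : ℂ)‖ /
          (r ^ 2 - ‖z - (x₀ : ℂ)‖ ^ 2))
        ≤ 1 - (1 / Real.pi) * Real.arctan (2 * r * ‖z - (x₀ : ℂ)‖ /
          (r ^ 2 - ‖z - (x₀ : ℂ)‖ ^ 2))) ∧
    (∀ t θ : ℝ, 0 < t → t < r → 0 < θ → θ < Real.pi →
      z - (x₀ : ℂ) = (t : ℂ) * Complex.exp ((θ : ℂ) * Complex.I) →
      hmUHP z t₁ t₂
          = 1 - (1 / Real.pi) * Real.arctan (2 * r * t * Real.sin θ / (r ^ 2 - t ^ 2)) ∧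
      ∀ θ' ∈ Set.Ioo (0 : ℝ) Real.pi,
        hmUHP ((x₀ : ℂ) + (t : ℂ) * Complex.I) t₁ t₂
          ≤ hmUHP ((x₀ : ℂ) + (t : ℂ) * Complex.exp ((θ' : ℂ) * Complex.I)) t₁ t₂) := by

  have hr0 : 0 < r := by rw [hr]; linarith
  set A := ‖z - (x₀ : ℂ)‖ with hA
  have hA0 : 0 ≤ A := norm_nonneg _
  have hA2 : A^2 = (z.re - x₀)^2 + z.im^2 := by
    rw [hA, Complex.sq_norm, Complex.normSq_apply]
    simp [Complex.sub_re, Complex.sub_im]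
    ring
  have hyA : z.im ≤ A := by
    have h := Complex.abs_im_le_norm (z - (x₀ : ℂ))
    simp [Complex.sub_im] at h
    calc z.im ≤ |z.im| := le_abs_self _
      _ ≤ A := h
  have hπ : 0 < π := pi_pos
  have hπinv : (0:ℝ) ≤ 1/π := by positivity
  refine ⟨?_, ?_, ?_, ?_⟩
  · -- part 1
    intro hgt
    have hd : r^2 < (z.re - x₀)^2 + z.im^2 := by nlinarith
    rw [hmA t₁ t₂ x₀ r hx₀ hr z hz hd]
    apply mul_le_mul_of_nonneg_left _ hπinv
    apply Real.arctan_strictMono.monotone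
    rw [← hA2]
    have hden : 0 < A^2 - r^2 := by nlinarith
    gcongr
  · -- part 2
    intro hEq
    exact hmB t₁ t₂ x₀ r hx₀ hr hr0 z hz (by nlinarith)
  · -- part 3
    intro hApos hAlt
    have hd : (z.re - x₀)^2 + z.im^2 < r^2 := by nlinarith
    have hden : 0 < r^2 - A^2 := by nlinarith
    constructor
    · rw [hmC t₁ t₂ x₀ r hx₀ hr hr0 z hz hd]
      apply sub_le_sub_left
      apply mul_le_mul_of_nonneg_left _ hπinv
      apply Real.arctan_strictMono.monotone
      rw [← hA2]
      gcongr
    · apply sub_le_sub_left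
      apply mul_le_mul_of_nonneg_left _ hπinv
      apply my_arctan_le_self
      positivity
  · -- part 4
    intro t θ ht htr hθ hθπ heq
    have hre : z.re - x₀ = t * Real.cos θ := by
      have := congrArg Complex.re heq
      simpa [Complex.sub_re, Complex.mul_re, Complex.exp_ofReal_mul_I_re,
        Complex.exp_ofReal_mul_I_im] using this
    have him : z.im = t * Real.sin θ := by
      have := congrArg Complex.im heq
      simpa [Complex.sub_im, Complex.mul_im, Complex.exp_ofReal_mul_I_re,
        Complex.exp_ofReal_mul_I_im] using this
    have hpyth : (z.re - x₀)^2 + z.im^2 = t^2 := by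
      rw [hre, him]
      have := Real.sin_sq_add_cos_sq θ
      nlinarith
    have hd : (z.re - x₀)^2 + z.im^2 < r^2 := by rw [hpyth]; nlinarith
    constructor
    · rw [hmC t₁ t₂ x₀ r hx₀ hr hr0 z hz hd, hpyth, him]
      ring_nf
    · intro θ' hθ'
      obtain ⟨hθ'0, hθ'π⟩ := hθ'
      have hsin : 0 < Real.sin θ' := Real.sin_pos_of_pos_of_lt_pi hθ'0 hθ'π
      have hsin1 : Real.sin θ' ≤ 1 := Real.sin_le_one θ'
      set w1 : ℂ := (x₀ : ℂ) + (t : ℂ) * Complex.I with hw1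
      set w2 : ℂ := (x₀ : ℂ) + (t : ℂ) * Complex.exp ((θ' : ℂ) * Complex.I) with hw2
      have hw1re : w1.re = x₀ := by simp [hw1]
      have hw1im : w1.im = t := by simp [hw1]
      have hw2re : w2.re = x₀ + t * Real.cos θ' := by
        simp [hw2, Complex.add_re, Complex.mul_re, Complex.exp_ofReal_mul_I_re,
          Complex.exp_ofReal_mul_I_im]
      have hw2im : w2.im = t * Real.sin θ' := by
        simp [hw2, Complex.add_im, Complex.mul_im, Complex.exp_ofReal_mul_I_re,
          Complex.exp_ofReal_mul_I_im]
      have hw1z : 0 < w1.im := by rw [hw1im]; exact ht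
      have hw2z : 0 < w2.im := by rw [hw2im]; positivity
      have hd1 : (w1.re - x₀)^2 + w1.im^2 < r^2 := by
        rw [hw1re, hw1im]; nlinarith
      have hd2 : (w2.re - x₀)^2 + w2.im^2 < r^2 := by
        rw [hw2re, hw2im]
        have := Real.sin_sq_add_cos_sq θ'
        nlinarith
      rw [hmC t₁ t₂ x₀ r hx₀ hr hr0 w1 hw1z hd1, hmC t₁ t₂ x₀ r hx₀ hr hr0 w2 hw2z hd2]
      apply sub_le_sub_left
      apply mul_le_mul_of_nonneg_left _ hπinv
      apply Real.arctan_strictMono.monotone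
      have e1 : (w1.re - x₀)^2 + w1.im^2 = t^2 := by rw [hw1re, hw1im]; ring
      have e2 : (w2.re - x₀)^2 + w2.im^2 = t^2 := by
        rw [hw2re, hw2im]
        have := Real.sin_sq_add_cos_sq θ'
        nlinarith
      rw [e1, e2, hw1im, hw2im]
      have hden : 0 < r^2 - t^2 := by nlinarith
      gcongr
      nlinarith
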